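/- Let $\Gamma$ be an infinite group, $\Lambda = \mathbb{Q}\Gamma$, and $R$ any $\mathbb{Q}\Gamma$-module. Then the $\Gamma$-invariants of $R \otimes_{\mathbb{Q}} \Lambda$ with the diagonal $\Gamma$-action vanish: $(R \otimes_{\mathbb{Q}} \Lambda)^\Gamma = 0$. -/

import Mathlib

open TensorProduct

private lemma ev_comm
    (Γ : Type) [Group Γ] [DecidableEq Γ]
    (R : Type) [AddCommGroup R] [Module ℚ R]
    (ρ : Representation ℚ Γ R) (g : Γ) (x : R ⊗[ℚ] MonoidAlgebra ℚ Γ) (k : Γ) :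
    ((MonoidAlgebra.coeffLinearEquiv ℚ (S := ℚ) (M := Γ)).lTensor R ≪≫ₗ finsuppScalarRight ℚ ℚ R Γ) ((ρ.tprod (Representation.ofMulAction ℚ Γ Γ)) g x) k
      = ρ g (((MonoidAlgebra.coeffLinearEquiv ℚ (S := ℚ) (M := Γ)).lTensor R ≪≫ₗ finsuppScalarRight ℚ ℚ R Γ) x (g⁻¹ * k)) := by
  induction x using TensorProduct.induction_on with
  | zero => simp
  | tmul r f =>
      have h1 : ((Representation.ofMulAction ℚ Γ Γ) g f).coeff k = f.coeff (g⁻¹ * k) :=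
        Representation.coeff_ofMulAction g f k
      rw [Representation.tprod_apply, TensorProduct.map_tmul, LinearEquiv.trans_apply,
        LinearEquiv.trans_apply, LinearEquiv.lTensor_tmul, LinearEquiv.lTensor_tmul]
      simp only [MonoidAlgebra.coeffLinearEquiv_apply,
        finsuppScalarRight_apply_tmul_apply, h1, map_smul]
  | add a b ha hb =>
      simp only [Representation.tprod_apply] at ha hb
      simp only [Representation.tprod_apply, map_add, Finsupp.add_apply, ha, hb]

/-- If `Γ` is an infinite group, `Λ = ℚΓ` its group algebra and `R` any `ℚΓ`-module
(given by a representation `ρ` of `Γ` on a `ℚ`-vector space `R`), then the invariants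
of `R ⊗_ℚ Λ` for the diagonal action of `Γ` vanish. -/
theorem invariants_tensor_regular_eq_bot
    (Γ : Type) [Group Γ] [Infinite Γ]
    (R : Type) [AddCommGroup R] [Module ℚ R]
    (ρ : Representation ℚ Γ R) :
    (ρ.tprod (Representation.ofMulAction ℚ Γ Γ)).invariants = ⊥ := by
  classical
  rw [eq_bot_iff]
  intro x hx
  simp only [Submodule.mem_bot]
  by_contra hne
  have hinv : ∀ g : Γ, (ρ.tprod (Representation.ofMulAction ℚ Γ Γ)) g x = x := hx
  set f := ((MonoidAlgebra.coeffLinearEquiv ℚ (S := ℚ) (M := Γ)).lTensor R ≪≫ₗ finsuppScalarRight ℚ ℚ R Γ) x with hf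
  have hfne : f ≠ 0 := by
    intro h
    exact hne (((MonoidAlgebra.coeffLinearEquiv ℚ (S := ℚ) (M := Γ)).lTensor R ≪≫ₗ finsuppScalarRight ℚ ℚ R Γ).map_eq_zero_iff.mp h)
  obtain ⟨k₀, hk₀⟩ : ∃ k, f k ≠ 0 := by
    by_contra h
    push_neg at h
    exact hfne (Finsupp.ext h)
  -- for every g, f (g * k₀) = ρ g (f k₀) ≠ 0
  have key : ∀ g : Γ, f (g * k₀) ≠ 0 := by
    intro g
    have := ev_comm Γ R ρ g x (g * k₀)
    rw [hinv g] at this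
    simp only [inv_mul_cancel_left] at this
    rw [this]
    intro h
    have := congrArg (ρ g⁻¹) h
    rw [← Module.End.mul_apply, ← map_mul, inv_mul_cancel, map_one,
      Module.End.one_apply, map_zero] at this
    exact hk₀ this
  have hsub : Set.range (fun g : Γ => g * k₀) ⊆ ↑f.support := by
    rintro _ ⟨g, rfl⟩
    exact Finsupp.mem_support_iff.mpr (key g)
  have : (Set.range (fun g : Γ => g * k₀)).Infinite :=
    Set.infinite_range_of_injective (fun a b h => by simpa using mul_right_cancel h)
  exact this (Set.Finite.subset f.support.finite_toSet hsub)
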